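/- Let (T(t))_{t≥0} denote the heat semigroup on ℝ, (T(t)f)(x) = (4πt)^{-1/2} ∫_ℝ e^{-(x−y)²/(4t)} f(y) dy. Then for all sufficiently large a ≥ 1, the function f_a := 𝟙_{⋃_{n=1}^∞ [a^n, 2a^n]} satisfies liminf_{t→∞} (T(t)f_a)(0) < limsup_{t→∞} (T(t)f_a)(0). In particular T(t)f_a(0) does not converge as t → ∞. -/

import Mathlib

open MeasureTheory Filter Topology Set

/-- The heat semigroup on the real line. -/
noncomputable def heat (t : ℝ) (f : ℝ → ℝ) (x : ℝ) : ℝ :=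
  (4 * Real.pi * t) ^ (-(1 : ℝ) / 2) * ∫ y : ℝ, Real.exp (-(x - y) ^ 2 / (4 * t)) * f y

/-- The indicator of `⋃_{n ≥ 1} [aⁿ, 2aⁿ]`. -/
noncomputable def fa (a : ℝ) : ℝ → ℝ :=
  (⋃ n : ℕ, Set.Icc (a ^ (n + 1)) (2 * a ^ (n + 1))).indicator fun _ => (1 : ℝ)


lemma gauss_int {t : ℝ} (ht : 0 < t) :
    Integrable (fun y : ℝ => Real.exp (-y ^ 2 / (4 * t))) := by
  have h := integrable_exp_neg_mul_sq (b := 1 / (4 * t)) (by positivity)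
  have he : (fun y : ℝ => Real.exp (-(1 / (4 * t)) * y ^ 2))
      = fun y : ℝ => Real.exp (-y ^ 2 / (4 * t)) := by
    funext y
    rw [show -(1 / (4 * t)) * y ^ 2 = -y ^ 2 / (4 * t) by ring]
  rwa [he] at h

lemma disj_aux {a : ℝ} (ha : 2 < a) :
    Pairwise (Function.onFun Disjoint fun n : ℕ => Icc (a ^ (n + 1)) (2 * a ^ (n + 1))) := by
  have ha1 : (1 : ℝ) ≤ a := by linarith
  have key : ∀ n m : ℕ, n < m →
      Disjoint (Icc (a ^ (n + 1)) (2 * a ^ (n + 1))) (Icc (a ^ (m + 1)) (2 * a ^ (m + 1))) := by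
    intro n m hnm
    apply Set.disjoint_left.2
    rintro x ⟨_, hx2⟩ ⟨hx3, _⟩
    have hp : (0 : ℝ) < a ^ (n + 1) := pow_pos (by linarith) _
    have h2 : a ^ (n + 2) ≤ a ^ (m + 1) := pow_le_pow_right₀ ha1 (by omega)
    have h1 : 2 * a ^ (n + 1) < a ^ (m + 1) := by
      calc 2 * a ^ (n + 1) < a * a ^ (n + 1) := by nlinarith
        _ = a ^ (n + 2) := by ring
        _ ≤ a ^ (m + 1) := h2
    linarith
  intro n m hnm
  rcases lt_or_gt_of_ne hnm with h | h
  · exact key n m h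
  · exact (key m n h).symm

lemma interval_upper {A t : ℝ} (hA : 0 < A) (ht : 0 < t) :
    ∫ y in Icc A (2 * A), Real.exp (-y ^ 2 / (4 * t)) ≤ A * Real.exp (-A ^ 2 / (4 * t)) := by
  have ht4 : (0 : ℝ) < 4 * t := by linarith
  have h1 : ∫ y in Icc A (2 * A), Real.exp (-y ^ 2 / (4 * t))
      ≤ ∫ _y in Icc A (2 * A), Real.exp (-A ^ 2 / (4 * t)) := by
    apply setIntegral_mono_on ((gauss_int ht).integrableOn)
      (integrableOn_const measure_Icc_lt_top.ne) measurableSet_Icc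
    intro x hx
    apply Real.exp_le_exp.2
    have h2 : A ^ 2 ≤ x ^ 2 := pow_le_pow_left₀ hA.le hx.1 2
    exact (div_le_div_iff_of_pos_right ht4).2 (neg_le_neg h2)
  calc _ ≤ _ := h1
    _ = A * Real.exp (-A ^ 2 / (4 * t)) := by
      rw [setIntegral_const, measureReal_def, Real.volume_Icc, ENNReal.toReal_ofReal (by linarith), smul_eq_mul]
      ring

lemma interval_lower {A : ℝ} (hA : 0 < A) :
    A * Real.exp (-1) ≤ ∫ y in Icc A (2 * A), Real.exp (-y ^ 2 / (4 * A ^ 2)) := by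
  have h4 : (0 : ℝ) < 4 * A ^ 2 := by positivity
  have hc : ∀ x ∈ Icc A (2 * A), Real.exp (-1) ≤ Real.exp (-x ^ 2 / (4 * A ^ 2)) := by
    intro x hx
    apply Real.exp_le_exp.2
    have hx2 : x ^ 2 ≤ 4 * A ^ 2 := by nlinarith [hx.1, hx.2]
    rw [neg_div]
    exact neg_le_neg ((div_le_one h4).2 hx2)
  have h := setIntegral_ge_of_const_le (μ := volume) (c := Real.exp (-1))
    (s := Icc A (2 * A)) (f := fun y => Real.exp (-y ^ 2 / (4 * A ^ 2)))
    measurableSet_Icc measure_Icc_lt_top.ne hc ((gauss_int (by positivity)).integrableOn)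
  have hv : (volume (Icc A (2 * A))).toReal = A := by
    rw [Real.volume_Icc, ENNReal.toReal_ofReal (by linarith)]; ring
  rw [measureReal_def, hv, smul_eq_mul] at h
  linarith [h]

lemma hU_meas (a : ℝ) : MeasurableSet (⋃ n : ℕ, Icc (a ^ (n + 1)) (2 * a ^ (n + 1))) :=
  MeasurableSet.iUnion fun _ => measurableSet_Icc

lemma integrand_eq (a t : ℝ) :
    (fun y : ℝ => Real.exp (-(0 - y) ^ 2 / (4 * t)) * fa a y)
      = (⋃ n : ℕ, Icc (a ^ (n + 1)) (2 * a ^ (n + 1))).indicator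
          (fun y => Real.exp (-y ^ 2 / (4 * t))) := by
  funext y
  rw [show (0 - y) ^ 2 = y ^ 2 by ring]
  unfold fa
  by_cases h : y ∈ ⋃ n : ℕ, Icc (a ^ (n + 1)) (2 * a ^ (n + 1))
  · rw [Set.indicator_of_mem h, Set.indicator_of_mem h, mul_one]
  · rw [Set.indicator_of_notMem h, Set.indicator_of_notMem h, mul_zero]

lemma heat_eq {a t : ℝ} (ha : 2 < a) (ht : 0 < t) :
    heat t (fa a) 0 = (4 * Real.pi * t) ^ (-(1 : ℝ) / 2)
      * ∑' n : ℕ, ∫ y in Icc (a ^ (n + 1)) (2 * a ^ (n + 1)), Real.exp (-y ^ 2 / (4 * t)) := by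
  unfold heat
  congr 1
  rw [integrand_eq, integral_indicator (hU_meas a)]
  exact integral_iUnion (fun _ => measurableSet_Icc) (disj_aux ha)
    (gauss_int ht).integrableOn

lemma pref_eq {c x : ℝ} (hc : 0 ≤ c) (hx : 0 < x) :
    (c * x ^ 2) ^ (-(1 : ℝ) / 2) = c ^ (-(1 : ℝ) / 2) * x⁻¹ := by
  rw [Real.mul_rpow hc (sq_nonneg x)]
  congr 1
  rw [← Real.rpow_natCast x 2, ← Real.rpow_mul hx.le]
  rw [show ((2 : ℕ) : ℝ) * (-(1 : ℝ) / 2) = -1 by norm_num, Real.rpow_neg_one]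

lemma sqrt_pref {a : ℝ} (ha : 0 < a) :
    (4 * Real.pi * a) ^ (-(1 : ℝ) / 2)
      = (4 * Real.pi) ^ (-(1 : ℝ) / 2) * (Real.sqrt a)⁻¹ := by
  rw [Real.mul_rpow (by positivity) ha.le]
  congr 1
  rw [Real.sqrt_eq_rpow, ← Real.rpow_neg_one (a ^ (1/2 : ℝ)), ← Real.rpow_mul ha.le]
  norm_num

lemma head_sum {a : ℝ} (ha : 2 ≤ a) (N : ℕ) :
    ∑ n ∈ Finset.range N, a ^ (n + 1) ≤ 2 * a ^ N := by
  induction N with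
  | zero => simp
  | succ N ih =>
    rw [Finset.sum_range_succ]
    have hp : (0 : ℝ) < a ^ N := pow_pos (by linarith) N
    have h2 : 2 * a ^ N ≤ a ^ (N + 1) := by rw [pow_succ]; nlinarith
    have h3 : a ^ (N + 1) + a ^ (N + 1) = 2 * a ^ (N + 1) := by ring
    linarith

lemma pow_ge_mul {a : ℝ} (ha : 2 ≤ a) (m : ℕ) : a * ((m : ℝ) + 1) ≤ a ^ (m + 1) := by
  induction m with
  | zero => simp
  | succ m ih =>
    have hm : (0 : ℝ) ≤ (m : ℝ) := Nat.cast_nonneg m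
    have : a ^ (m + 1 + 1) = a * a ^ (m + 1) := by ring
    rw [this]
    have key := mul_le_mul_of_nonneg_left ih (show (0:ℝ) ≤ a by linarith)
    have h2 : (m : ℝ) + 1 + 1 ≤ a * ((m : ℝ) + 1) := by nlinarith
    have h3 := mul_le_mul_of_nonneg_left h2 (show (0:ℝ) ≤ a by linarith)
    push_cast
    linarith

lemma exp_neg_le_inv {y : ℝ} (hy : 0 < y) : Real.exp (-y) ≤ y⁻¹ := by
  rw [Real.exp_neg]
  have h : y ≤ Real.exp y := by linarith [Real.add_one_le_exp y]
  exact inv_anti₀ hy h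

lemma tail_term {a : ℝ} (ha : 2 ≤ a) (k : ℕ) :
    a ^ (k + 1) * Real.exp (-a ^ (2 * k + 1) / 4)
      ≤ 8 * Real.exp (-a / 8) * Real.exp (-(a / 4)) ^ k := by
  set x := a ^ (2 * k + 1) with hxdef
  have hx : 0 < x := pow_pos (by linarith) _
  have hk1 : a ^ (k + 1) ≤ x := pow_le_pow_right₀ (by linarith) (by omega)
  have h8 : x ≤ 8 * Real.exp (x / 8) := by linarith [Real.add_one_le_exp (x / 8)]
  have step1 : a ^ (k + 1) * Real.exp (-x / 4) ≤ 8 * Real.exp (-x / 8) := by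
    have e1 : Real.exp (x / 8) * Real.exp (-x / 4) = Real.exp (-x / 8) := by
      rw [← Real.exp_add]; congr 1; ring
    calc a ^ (k + 1) * Real.exp (-x / 4) ≤ 8 * Real.exp (x / 8) * Real.exp (-x / 4) := by
          apply mul_le_mul_of_nonneg_right _ (Real.exp_pos _).le
          linarith
      _ = 8 * Real.exp (-x / 8) := by rw [mul_assoc, e1]
  have hax : a * (2 * (k : ℝ) + 1) ≤ x := by
    have := pow_ge_mul ha (2 * k)
    rw [hxdef]
    push_cast at this ⊢
    convert this using 2 <;> push_cast <;> ring
  have step2 : Real.exp (-x / 8) ≤ Real.exp (-a / 8) * Real.exp (-(a / 4)) ^ k := by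
    rw [← Real.exp_nat_mul, ← Real.exp_add]
    apply Real.exp_le_exp.2
    have : -x / 8 ≤ -(a * (2 * (k : ℝ) + 1)) / 8 := by linarith
    calc -x / 8 ≤ -(a * (2 * (k : ℝ) + 1)) / 8 := this
      _ = -a / 8 + (k : ℝ) * -(a / 4) := by ring
  calc a ^ (k + 1) * Real.exp (-x / 4) ≤ 8 * Real.exp (-x / 8) := step1
    _ ≤ 8 * (Real.exp (-a / 8) * Real.exp (-(a / 4)) ^ k) := by
        apply mul_le_mul_of_nonneg_left step2 (by norm_num)
    _ = 8 * Real.exp (-a / 8) * Real.exp (-(a / 4)) ^ k := by ring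

lemma tail_sum {a : ℝ} (ha : 1000 ≤ a) :
    Summable (fun k : ℕ => a ^ (k + 1) * Real.exp (-a ^ (2 * k + 1) / 4)) ∧
      ∑' k : ℕ, a ^ (k + 1) * Real.exp (-a ^ (2 * k + 1) / 4) ≤ 1 := by
  have ha2 : (2 : ℝ) ≤ a := by linarith
  have ha0 : (0 : ℝ) < a := by linarith
  set r := Real.exp (-(a / 4)) with hrdef
  have hr0 : 0 ≤ r := (Real.exp_pos _).le
  have hr1 : r < 1 := Real.exp_lt_one_iff.2 (by linarith)
  have hrhalf : r ≤ 1 / 2 := by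
    have := exp_neg_le_inv (y := a / 4) (by linarith)
    have h4a : (a / 4)⁻¹ ≤ 1 / 2 := by
      rw [inv_div, div_le_div_iff₀ ha0 (by norm_num)]
      linarith
    linarith
  have hgeom : Summable (fun k : ℕ => 8 * Real.exp (-a / 8) * r ^ k) :=
    (summable_geometric_of_lt_one hr0 hr1).mul_left _
  have hle := tail_term ha2
  have hpos : ∀ k : ℕ, 0 ≤ a ^ (k + 1) * Real.exp (-a ^ (2 * k + 1) / 4) := by
    intro k; positivity
  have hsummable := Summable.of_nonneg_of_le hpos hle hgeom
  refine ⟨hsummable, ?_⟩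
  have h1 : ∑' k : ℕ, a ^ (k + 1) * Real.exp (-a ^ (2 * k + 1) / 4)
      ≤ ∑' k : ℕ, 8 * Real.exp (-a / 8) * r ^ k := Summable.tsum_le_tsum hle hsummable hgeom
  have h2 : ∑' k : ℕ, 8 * Real.exp (-a / 8) * r ^ k
      = 8 * Real.exp (-a / 8) * (1 - r)⁻¹ := by
    rw [tsum_mul_left, tsum_geometric_of_lt_one hr0 hr1]
  have h3 : Real.exp (-a / 8) ≤ 8 / a := by
    have := exp_neg_le_inv (y := a / 8) (by linarith)
    rw [show -a / 8 = -(a / 8) by ring]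
    calc Real.exp (-(a / 8)) ≤ (a / 8)⁻¹ := this
      _ = 8 / a := by field_simp
  have h4 : (1 - r)⁻¹ ≤ 2 := by
    have hhalf : (1 : ℝ) / 2 ≤ 1 - r := by linarith
    calc (1 - r)⁻¹ ≤ ((1 : ℝ) / 2)⁻¹ := inv_anti₀ (by norm_num) hhalf
      _ = 2 := by norm_num
  have h5 : 8 * Real.exp (-a / 8) * (1 - r)⁻¹ ≤ 8 * (8 / a) * 2 := by
    have he : 0 ≤ Real.exp (-a / 8) := (Real.exp_pos _).le
    have hi : 0 ≤ (1 - r)⁻¹ := inv_nonneg.2 (by linarith)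
    nlinarith
  have h6 : 8 * (8 / a) * 2 ≤ 1 := by
    rw [show 8 * (8 / a) * 2 = 128 / a by ring, div_le_one ha0]
    linarith
  linarith

lemma tsum_T {a : ℝ} (ha : 1000 ≤ a) (N : ℕ) :
    Summable (fun n : ℕ => a ^ (n + 1) * Real.exp (-(a ^ (n + 1)) ^ 2 / (4 * a ^ (2 * N + 1))))
    ∧ ∑' n : ℕ, a ^ (n + 1) * Real.exp (-(a ^ (n + 1)) ^ 2 / (4 * a ^ (2 * N + 1)))
        ≤ 3 * a ^ N := by
  have ha0 : (0 : ℝ) < a := by linarith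
  set T := fun n : ℕ => a ^ (n + 1) * Real.exp (-(a ^ (n + 1)) ^ 2 / (4 * a ^ (2 * N + 1)))
    with hTdef
  have hshift : ∀ k : ℕ, T (k + N) = a ^ N * (a ^ (k + 1) * Real.exp (-a ^ (2 * k + 1) / 4)) := by
    intro k
    have hXne : a ^ (2 * N + 1) ≠ 0 := pow_ne_zero _ (by linarith)
    have h1 : (a ^ (k + N + 1)) ^ 2 / (4 * a ^ (2 * N + 1)) = a ^ (2 * k + 1) / 4 := by
      rw [← pow_mul, show (k + N + 1) * 2 = (2 * N + 1) + (2 * k + 1) by ring, pow_add,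
        show 4 * a ^ (2 * N + 1) = a ^ (2 * N + 1) * 4 by ring,
        mul_div_mul_left _ _ hXne]
    have h2 : a ^ (k + N + 1) = a ^ N * a ^ (k + 1) := by ring
    rw [hTdef]
    simp only
    rw [neg_div, h1, ← neg_div, h2, mul_assoc]
  have tail := tail_sum ha
  have hsum_shift : Summable (fun k : ℕ => T (k + N)) :=
    (tail.1.mul_left (a ^ N)).congr fun k => (hshift k).symm
  have hT : Summable T := (summable_nat_add_iff N).1 hsum_shift
  have heq := (Summable.sum_add_tsum_nat_add N hT).symm
  have htail_le : ∑' k : ℕ, T (k + N) ≤ a ^ N := by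
    calc ∑' k : ℕ, T (k + N)
        = ∑' k : ℕ, a ^ N * (a ^ (k + 1) * Real.exp (-a ^ (2 * k + 1) / 4)) :=
          tsum_congr hshift
      _ = a ^ N * ∑' k : ℕ, a ^ (k + 1) * Real.exp (-a ^ (2 * k + 1) / 4) := tsum_mul_left
      _ ≤ a ^ N * 1 := mul_le_mul_of_nonneg_left tail.2 (pow_nonneg ha0.le N)
      _ = a ^ N := mul_one _
  have hhead : ∑ n ∈ Finset.range N, T n ≤ 2 * a ^ N := by
    calc ∑ n ∈ Finset.range N, T n ≤ ∑ n ∈ Finset.range N, a ^ (n + 1) := by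
          apply Finset.sum_le_sum
          intro n _
          rw [hTdef]
          simp only
          have he : Real.exp (-(a ^ (n + 1)) ^ 2 / (4 * a ^ (2 * N + 1))) ≤ 1 := by
            apply Real.exp_le_one_iff.2
            have h1 : (0:ℝ) ≤ (a ^ (n + 1)) ^ 2 / (4 * a ^ (2 * N + 1)) := by positivity
            rw [neg_div]
            linarith
          have hp : (0:ℝ) ≤ a ^ (n + 1) := pow_nonneg ha0.le _
          nlinarith
      _ ≤ 2 * a ^ N := head_sum (by linarith) N
  exact ⟨hT, by rw [show tsum T = ∑' n : ℕ, T n from rfl, heq]; linarith⟩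

lemma heat_upper {a : ℝ} (ha : 1000 ≤ a) (N : ℕ) :
    heat (a ^ (2 * N + 1)) (fa a) 0
      ≤ 3 * (4 * Real.pi) ^ (-(1 : ℝ) / 2) / Real.sqrt a := by
  have ha0 : (0 : ℝ) < a := by linarith
  have ht : (0 : ℝ) < a ^ (2 * N + 1) := pow_pos ha0 _
  rw [heat_eq (show (2 : ℝ) < a by linarith) ht]
  have hTs := tsum_T ha N
  have hSle : ∀ n : ℕ, (∫ y in Icc (a ^ (n + 1)) (2 * a ^ (n + 1)),
      Real.exp (-y ^ 2 / (4 * a ^ (2 * N + 1))))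
      ≤ a ^ (n + 1) * Real.exp (-(a ^ (n + 1)) ^ 2 / (4 * a ^ (2 * N + 1))) :=
    fun n => interval_upper (pow_pos ha0 _) ht
  have hS0 : ∀ n : ℕ, 0 ≤ ∫ y in Icc (a ^ (n + 1)) (2 * a ^ (n + 1)),
      Real.exp (-y ^ 2 / (4 * a ^ (2 * N + 1))) :=
    fun n => setIntegral_nonneg measurableSet_Icc fun x _ => (Real.exp_pos _).le
  have hSsum := Summable.of_nonneg_of_le hS0 hSle hTs.1
  have h2 : (∑' n : ℕ, ∫ y in Icc (a ^ (n + 1)) (2 * a ^ (n + 1)),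
      Real.exp (-y ^ 2 / (4 * a ^ (2 * N + 1)))) ≤ 3 * a ^ N :=
    le_trans (Summable.tsum_le_tsum hSle hSsum hTs.1) hTs.2
  have hpre : (4 * Real.pi * a ^ (2 * N + 1)) ^ (-(1 : ℝ) / 2)
      = (4 * Real.pi) ^ (-(1 : ℝ) / 2) * (Real.sqrt a)⁻¹ * (a ^ N)⁻¹ := by
    rw [show 4 * Real.pi * a ^ (2 * N + 1) = (4 * Real.pi * a) * (a ^ N) ^ 2 by ring,
      pref_eq (by positivity) (pow_pos ha0 N), sqrt_pref ha0]
  have hprepos : (0 : ℝ) ≤ (4 * Real.pi * a ^ (2 * N + 1)) ^ (-(1 : ℝ) / 2) :=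
    Real.rpow_nonneg (by positivity) _
  calc (4 * Real.pi * a ^ (2 * N + 1)) ^ (-(1 : ℝ) / 2)
      * ∑' n : ℕ, ∫ y in Icc (a ^ (n + 1)) (2 * a ^ (n + 1)),
          Real.exp (-y ^ 2 / (4 * a ^ (2 * N + 1)))
      ≤ (4 * Real.pi * a ^ (2 * N + 1)) ^ (-(1 : ℝ) / 2) * (3 * a ^ N) :=
        mul_le_mul_of_nonneg_left h2 hprepos
    _ = 3 * (4 * Real.pi) ^ (-(1 : ℝ) / 2) / Real.sqrt a := by
        rw [hpre]
        have h1 : Real.sqrt a ≠ 0 := (Real.sqrt_pos.2 ha0).ne'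
        have h2' : (a : ℝ) ^ N ≠ 0 := (pow_pos ha0 N).ne'
        field_simp

lemma heat_lower {a : ℝ} (ha : 1000 ≤ a) (N : ℕ) :
    (4 * Real.pi) ^ (-(1 : ℝ) / 2) * Real.exp (-1) ≤ heat (a ^ (2 * N + 2)) (fa a) 0 := by
  have ha0 : (0 : ℝ) < a := by linarith
  have hA0 : (0 : ℝ) < a ^ (N + 1) := pow_pos ha0 _
  have ht : a ^ (2 * N + 2) = (a ^ (N + 1)) ^ 2 := by ring
  have ht0 : (0 : ℝ) < a ^ (2 * N + 2) := pow_pos ha0 _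
  unfold heat
  rw [integrand_eq, integral_indicator (hU_meas a)]
  have hsub : Icc (a ^ (N + 1)) (2 * a ^ (N + 1))
      ⊆ ⋃ n : ℕ, Icc (a ^ (n + 1)) (2 * a ^ (n + 1)) :=
    Set.subset_iUnion (fun n : ℕ => Icc (a ^ (n + 1)) (2 * a ^ (n + 1))) N
  have hmono : (∫ y in Icc (a ^ (N + 1)) (2 * a ^ (N + 1)),
      Real.exp (-y ^ 2 / (4 * a ^ (2 * N + 2))))
      ≤ ∫ y in ⋃ n : ℕ, Icc (a ^ (n + 1)) (2 * a ^ (n + 1)),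
          Real.exp (-y ^ 2 / (4 * a ^ (2 * N + 2))) :=
    setIntegral_mono_set (gauss_int ht0).integrableOn
      (ae_of_all _ fun x => (Real.exp_pos _).le)
      (HasSubset.Subset.eventuallyLE hsub)
  have hlow : a ^ (N + 1) * Real.exp (-1)
      ≤ ∫ y in Icc (a ^ (N + 1)) (2 * a ^ (N + 1)),
          Real.exp (-y ^ 2 / (4 * a ^ (2 * N + 2))) := by
    rw [ht]
    exact interval_lower hA0
  have hpre : (4 * Real.pi * a ^ (2 * N + 2)) ^ (-(1 : ℝ) / 2)
      = (4 * Real.pi) ^ (-(1 : ℝ) / 2) * (a ^ (N + 1))⁻¹ := by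
    rw [show 4 * Real.pi * a ^ (2 * N + 2) = (4 * Real.pi) * (a ^ (N + 1)) ^ 2 by ring,
      pref_eq (by positivity) hA0]
  have hprepos : (0 : ℝ) ≤ (4 * Real.pi * a ^ (2 * N + 2)) ^ (-(1 : ℝ) / 2) :=
    Real.rpow_nonneg (by positivity) _
  calc (4 * Real.pi) ^ (-(1 : ℝ) / 2) * Real.exp (-1)
      = (4 * Real.pi * a ^ (2 * N + 2)) ^ (-(1 : ℝ) / 2) * (a ^ (N + 1) * Real.exp (-1)) := by
        rw [hpre]
        field_simp
    _ ≤ (4 * Real.pi * a ^ (2 * N + 2)) ^ (-(1 : ℝ) / 2)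
        * ∫ y in ⋃ n : ℕ, Icc (a ^ (n + 1)) (2 * a ^ (n + 1)),
            Real.exp (-y ^ 2 / (4 * a ^ (2 * N + 2))) :=
        mul_le_mul_of_nonneg_left (hlow.trans hmono) hprepos

lemma heat_le_one {a : ℝ} (ha : 1000 ≤ a) {t : ℝ} (ht : 0 < t) : heat t (fa a) 0 ≤ 1 := by
  unfold heat
  rw [integrand_eq, integral_indicator (hU_meas a)]
  have hg : (∫ y : ℝ, Real.exp (-y ^ 2 / (4 * t))) = Real.sqrt (4 * Real.pi * t) := by
    have h := integral_gaussian (1 / (4 * t))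
    have he : (fun y : ℝ => Real.exp (-(1 / (4 * t)) * y ^ 2))
        = fun y : ℝ => Real.exp (-y ^ 2 / (4 * t)) := by
      funext y
      rw [show -(1 / (4 * t)) * y ^ 2 = -y ^ 2 / (4 * t) by ring]
    rw [he] at h
    rw [h]
    congr 1
    field_simp
  have hmono : (∫ y in ⋃ n : ℕ, Icc (a ^ (n + 1)) (2 * a ^ (n + 1)),
      Real.exp (-y ^ 2 / (4 * t))) ≤ ∫ y : ℝ, Real.exp (-y ^ 2 / (4 * t)) :=
    setIntegral_le_integral (gauss_int ht) (ae_of_all _ fun x => (Real.exp_pos _).le)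
  have hprepos : (0 : ℝ) ≤ (4 * Real.pi * t) ^ (-(1 : ℝ) / 2) :=
    Real.rpow_nonneg (by positivity) _
  calc (4 * Real.pi * t) ^ (-(1 : ℝ) / 2)
      * ∫ y in ⋃ n : ℕ, Icc (a ^ (n + 1)) (2 * a ^ (n + 1)), Real.exp (-y ^ 2 / (4 * t))
      ≤ (4 * Real.pi * t) ^ (-(1 : ℝ) / 2) * Real.sqrt (4 * Real.pi * t) := by
        rw [← hg]
        exact mul_le_mul_of_nonneg_left hmono hprepos
    _ = 1 := by
        rw [Real.sqrt_eq_rpow, ← Real.rpow_add (by positivity),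
          show -(1 : ℝ) / 2 + 1 / 2 = 0 by norm_num, Real.rpow_zero]

lemma heat_nonneg {a t : ℝ} (ht : 0 < t) : 0 ≤ heat t (fa a) 0 := by
  unfold heat
  apply mul_nonneg (Real.rpow_nonneg (by positivity) _)
  apply integral_nonneg
  intro y
  apply mul_nonneg (Real.exp_pos _).le
  unfold fa
  exact Set.indicator_nonneg (fun _ _ => zero_le_one) y

theorem stmt_16 :
    ∃ a₀ : ℝ, 1 ≤ a₀ ∧ ∀ a : ℝ, a₀ ≤ a →
      liminf (fun t : ℝ => heat t (fa a) 0) atTop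
        < limsup (fun t : ℝ => heat t (fa a) 0) atTop := by
  refine ⟨1000, by norm_num, fun a ha => ?_⟩
  have ha0 : (0 : ℝ) < a := by linarith
  set c : ℝ := (4 * Real.pi) ^ (-(1 : ℝ) / 2) with hc_def
  have hc : 0 < c := Real.rpow_pos_of_pos (by positivity) _
  have hsq : (9 : ℝ) < Real.sqrt a := by
    rw [show (9 : ℝ) = Real.sqrt 81 by
      rw [show (81 : ℝ) = 9 ^ 2 by norm_num, Real.sqrt_sq (by norm_num)]]
    exact Real.sqrt_lt_sqrt (by norm_num) (by linarith)
  have hsqpos : 0 < Real.sqrt a := by linarith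
  have key : 3 * c / Real.sqrt a < c * Real.exp (-1) := by
    have h3 : Real.exp 1 < 3 := lt_trans Real.exp_one_lt_d9 (by norm_num)
    have he : (1 : ℝ) / 3 < Real.exp (-1) := by
      rw [Real.exp_neg]
      rw [show (1 : ℝ) / 3 = 3⁻¹ by norm_num]
      exact inv_strictAnti₀ (Real.exp_pos 1) h3
    have h1 : 3 / Real.sqrt a < 1 / 3 := by
      rw [div_lt_div_iff₀ hsqpos (by norm_num)]
      linarith
    calc 3 * c / Real.sqrt a = c * (3 / Real.sqrt a) := by ring
      _ < c * (1 / 3) := by exact mul_lt_mul_of_pos_left h1 hc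
      _ ≤ c * Real.exp (-1) := mul_le_mul_of_nonneg_left he.le hc.le
  have htend := tendsto_pow_atTop_atTop_of_one_lt (show (1 : ℝ) < a by linarith)
  have hbdd_le : IsBoundedUnder (· ≤ ·) atTop (fun t : ℝ => heat t (fa a) 0) :=
    ⟨1, eventually_map.2 (by
      filter_upwards [eventually_gt_atTop (0 : ℝ)] with t ht
      exact heat_le_one ha ht)⟩
  have hbdd_ge : IsBoundedUnder (· ≥ ·) atTop (fun t : ℝ => heat t (fa a) 0) :=
    ⟨0, eventually_map.2 (by
      filter_upwards [eventually_gt_atTop (0 : ℝ)] with t ht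
      exact heat_nonneg ht)⟩
  have hfr1 : ∃ᶠ t in atTop, heat t (fa a) 0 ≤ 3 * c / Real.sqrt a := by
    rw [frequently_atTop]
    intro b
    obtain ⟨N, hN⟩ := (htend.eventually_ge_atTop b).exists
    refine ⟨a ^ (2 * N + 1), ?_, heat_upper ha N⟩
    calc b ≤ a ^ N := hN
      _ ≤ a ^ (2 * N + 1) := pow_le_pow_right₀ (by linarith) (by omega)
  have hfr2 : ∃ᶠ t in atTop, c * Real.exp (-1) ≤ heat t (fa a) 0 := by
    rw [frequently_atTop]
    intro b
    obtain ⟨N, hN⟩ := (htend.eventually_ge_atTop b).exists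
    refine ⟨a ^ (2 * N + 2), ?_, heat_lower ha N⟩
    calc b ≤ a ^ N := hN
      _ ≤ a ^ (2 * N + 2) := pow_le_pow_right₀ (by linarith) (by omega)
  calc liminf (fun t : ℝ => heat t (fa a) 0) atTop
      ≤ 3 * c / Real.sqrt a := liminf_le_of_frequently_le hfr1 hbdd_ge
    _ < c * Real.exp (-1) := key
    _ ≤ limsup (fun t : ℝ => heat t (fa a) 0) atTop :=
        le_limsup_of_frequently_le hfr2 hbdd_le
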